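/- arXiv:1908.08454 — 3 statements merged into one kernel-verified Lean document; each statement's English description precedes it below -/
import Mathlib

section
/- Let A ∈ Q^{t1×t2}, b ∈ Q^{t1}, p ∈ (1,∞], and set p* = p/(p-1) ∈ [1,∞). Consider Z = sup{‖r - s‖_{p*} : r, s ∈ R^{t2}, r ≥ 0, s ≥ 0, Ar = b, r + s = e} (with Z = -∞ if the feasible set is empty). Then Z = t2^{1/p*} if and only if there exists a binary vector r ∈ {0,1}^{t2} with Ar = b. -/
open Finset
open scoped ENNReal

/-- The dual exponent p* = p/(p-1), with p* = 1 when p = ∞. -/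
noncomputable def dualExp (p : ℝ≥0∞) : ℝ :=
  if p = ⊤ then 1 else p.toReal / (p.toReal - 1)

/-- For p ∈ (1,∞], the value t2^{1/p*} is attained as the maximum of ‖r - s‖_{p*}
over {r,s ≥ 0, Ar = b, r + s = e} if and only if there is a binary r with Ar = b. -/
theorem stmt11 {t1 t2 : ℕ} (A : Matrix (Fin t1) (Fin t2) ℚ) (b : Fin t1 → ℚ)
    (p : ℝ≥0∞) (hp : 1 < p) :
    IsGreatest
      {y | ∃ r s : Fin t2 → ℝ, (∀ i, 0 ≤ r i) ∧ (∀ i, 0 ≤ s i) ∧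
        (∀ i, ∑ j, (A i j : ℝ) * r j = (b i : ℝ)) ∧ (∀ i, r i + s i = 1) ∧
        y = (∑ i, |r i - s i| ^ dualExp p) ^ (1 / dualExp p)}
      ((t2 : ℝ) ^ (1 / dualExp p))
    ↔ ∃ r : Fin t2 → ℚ, (∀ i, r i = 0 ∨ r i = 1) ∧ ∀ i, ∑ j, A i j * r j = b i := by
  set q := dualExp p with hq_def
  have hq : 0 < q := by
    rw [hq_def, dualExp]
    split_ifs with h
    · norm_num
    · have h1 : 1 < p.toReal := by
        rw [show (1:ℝ) = (1:ℝ≥0∞).toReal by simp]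
        exact (ENNReal.toReal_lt_toReal (by simp) h).mpr hp
      have : 0 < p.toReal - 1 := by linarith
      positivity
  constructor
  · rintro ⟨⟨r, s, hr, hs, hAr, hrs, hy⟩, -⟩
    have hle : ∀ i, |r i - s i| ≤ 1 := fun i => by
      rw [abs_le]; constructor <;> nlinarith [hr i, hs i, hrs i]
    have hsum_nonneg : 0 ≤ ∑ i, |r i - s i| ^ q :=
      Finset.sum_nonneg fun i _ => Real.rpow_nonneg (abs_nonneg _) _
    have hsum_eq : ∑ i, |r i - s i| ^ q = (t2 : ℝ) := by
      have h1 : ((∑ i, |r i - s i| ^ q) ^ (1/q)) ^ q = ((t2:ℝ) ^ (1/q)) ^ q := by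
        rw [← hy]
      rwa [one_div, Real.rpow_inv_rpow hsum_nonneg hq.ne',
        Real.rpow_inv_rpow (by positivity) hq.ne'] at h1
    have hone : ∀ i, |r i - s i| = 1 := by
      by_contra hc
      push_neg at hc
      obtain ⟨i, hi⟩ := hc
      have hlt : |r i - s i| ^ q < 1 :=
        Real.rpow_lt_one (abs_nonneg _) (lt_of_le_of_ne (hle i) hi) hq
      have hlt2 : ∑ j, |r j - s j| ^ q < ∑ _j : Fin t2, (1:ℝ) :=
        Finset.sum_lt_sum (fun j _ => Real.rpow_le_one (abs_nonneg _) (hle j) hq.le)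
          ⟨i, Finset.mem_univ i, hlt⟩
      simp only [Finset.sum_const, Finset.card_univ, Fintype.card_fin, nsmul_eq_mul,
        mul_one] at hlt2
      linarith [hsum_eq]
    have hbin : ∀ i, r i = 0 ∨ r i = 1 := fun i => by
      have h := hone i
      have h2 := hrs i
      rcases (abs_eq (by norm_num : (0:ℝ) ≤ 1)).mp h with h' | h'
      · right; linarith
      · left; linarith
    refine ⟨fun i => if r i = 1 then 1 else 0, fun i => by dsimp only; split_ifs <;> simp,
      fun i => ?_⟩
    have h2 : ((∑ j, A i j * (if r j = 1 then (1:ℚ) else 0)) : ℝ) = (b i : ℝ) := by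
      rw [show ((∑ j, A i j * (if r j = 1 then (1:ℚ) else 0)) : ℝ)
          = ∑ j, (A i j : ℝ) * r j from by
        push_cast
        exact Finset.sum_congr rfl fun j _ => by
          rcases hbin j with h | h <;> simp [h]]
      exact hAr i
    exact_mod_cast h2
  · rintro ⟨r, hbin, hAr⟩
    have habs : ∀ i, |(r i : ℝ) - (1 - (r i : ℝ))| = 1 := fun i => by
      rcases hbin i with h | h <;> simp [h]
    constructor
    · refine ⟨fun i => (r i : ℝ), fun i => 1 - (r i : ℝ), fun i => ?_, fun i => ?_,
        fun i => ?_, fun i => by ring, ?_⟩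
      · rcases hbin i with h | h <;> simp [h]
      · rcases hbin i with h | h <;> simp [h]
      · dsimp only; exact_mod_cast congrArg (fun x : ℚ => (x : ℝ)) (hAr i)
      · rw [Finset.sum_congr rfl fun i _ => by rw [habs i, Real.one_rpow]]
        simp
    · rintro y ⟨r', s', hr', hs', hAr', hrs', rfl⟩
      have hle : ∀ i, |r' i - s' i| ≤ 1 := fun i => by
        rw [abs_le]; constructor <;> nlinarith [hr' i, hs' i, hrs' i]
      have hsum_le : ∑ i, |r' i - s' i| ^ q ≤ (t2 : ℝ) := by
        calc ∑ i, |r' i - s' i| ^ q ≤ ∑ _i : Fin t2, (1:ℝ) :=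
          Finset.sum_le_sum fun i _ => Real.rpow_le_one (abs_nonneg _) (hle i) hq.le
        _ = t2 := by simp
      exact Real.rpow_le_rpow
        (Finset.sum_nonneg fun i _ => Real.rpow_nonneg (abs_nonneg _) _)
        hsum_le (by positivity)
end

section
/- Let T ∈ R^{ℓ×m} with all entries of the same sign (all nonnegative or all nonpositive), π ∈ R_+^ℓ, h ∈ R^ℓ, ζ_T ∈ R^m, and θ ≥ 0. Then sup{(h - Tξ)ᵀπ : ξ ∈ R^m, ‖ξ - ζ_T‖_∞ ≤ θ} = (h - Tζ_T)ᵀπ + θ eᵀ|T|ᵀπ. -/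
open Finset

/-- For sign-constant T, π ≥ 0, and θ ≥ 0:
sup{(h - Tξ)ᵀπ : ‖ξ - ζ_T‖_∞ ≤ θ} = (h - Tζ_T)ᵀπ + θ eᵀ|T|ᵀπ. -/
theorem stmt15 {l m : ℕ} (T : Matrix (Fin l) (Fin m) ℝ)
    (hT : (∀ i j, 0 ≤ T i j) ∨ (∀ i j, T i j ≤ 0))
    (π : Fin l → ℝ) (hπ : ∀ i, 0 ≤ π i) (h : Fin l → ℝ) (ζT : Fin m → ℝ)
    (θ : ℝ) (hθ : 0 ≤ θ) :
    sSup {y | ∃ ξ : Fin m → ℝ, (⨆ j, |ξ j - ζT j|) ≤ θ ∧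
        y = ∑ i, (h i - ∑ j, T i j * ξ j) * π i}
      = (∑ i, (h i - ∑ j, T i j * ζT j) * π i) + θ * ∑ j, ∑ i, |T i j| * π i := by
  apply IsGreatest.csSup_eq
  constructor
  · -- membership: the sup is attained
    obtain hpos | hneg := hT
    · refine ⟨fun j => ζT j - θ, ?_, ?_⟩
      · exact Real.iSup_le (fun j => by simp [abs_of_nonneg hθ]) hθ
      · have habs : ∀ i j, |T i j| = T i j := fun i j => abs_of_nonneg (hpos i j)
        simp only [habs]
        rw [Finset.sum_comm, Finset.mul_sum, ← Finset.sum_add_distrib]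
        refine Finset.sum_congr rfl fun i _ => ?_
        have h1 : ∑ j, T i j * (ζT j - θ) = ∑ j, T i j * ζT j - (∑ j, T i j) * θ := by
          rw [Finset.sum_mul, ← Finset.sum_sub_distrib]
          exact Finset.sum_congr rfl fun j _ => by ring
        rw [h1, ← Finset.sum_mul]; ring
    · refine ⟨fun j => ζT j + θ, ?_, ?_⟩
      · exact Real.iSup_le (fun j => by simp [abs_of_nonneg hθ]) hθ
      · have habs : ∀ i j, |T i j| = -T i j := fun i j => abs_of_nonpos (hneg i j)
        simp only [habs]
        rw [Finset.sum_comm, Finset.mul_sum, ← Finset.sum_add_distrib]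
        refine Finset.sum_congr rfl fun i _ => ?_
        have h1 : ∑ j, T i j * (ζT j + θ) = ∑ j, T i j * ζT j + (∑ j, T i j) * θ := by
          rw [Finset.sum_mul, ← Finset.sum_add_distrib]
          exact Finset.sum_congr rfl fun j _ => by ring
        simp only [h1, neg_mul, Finset.sum_neg_distrib, ← Finset.sum_mul]; ring
  · -- upper bound
    rintro y ⟨ξ, hξ, rfl⟩
    have hbd : ∀ j, |ξ j - ζT j| ≤ θ := fun j =>
      le_trans (le_ciSup (f := fun j => |ξ j - ζT j|) (Set.finite_range _).bddAbove j) hξ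
    have hsplit : ∑ i, (h i - ∑ j, T i j * ξ j) * π i
        = ∑ i, (h i - ∑ j, T i j * ζT j) * π i
          + ∑ i, (∑ j, T i j * (ζT j - ξ j)) * π i := by
      rw [← Finset.sum_add_distrib]
      refine Finset.sum_congr rfl fun i _ => ?_
      have : ∑ j, T i j * (ζT j - ξ j) = ∑ j, T i j * ζT j - ∑ j, T i j * ξ j := by
        rw [← Finset.sum_sub_distrib]
        exact Finset.sum_congr rfl fun j _ => by ring
      rw [this]; ring
    rw [hsplit]
    gcongr ?_ + ?_
    · exact le_refl _
    · have : θ * ∑ j, ∑ i, |T i j| * π i = ∑ i, (∑ j, θ * |T i j|) * π i := by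
        rw [Finset.sum_comm, Finset.mul_sum]
        refine Finset.sum_congr rfl fun i _ => ?_
        rw [Finset.mul_sum, Finset.sum_mul]
        exact Finset.sum_congr rfl fun j _ => by ring
      rw [this]
      refine Finset.sum_le_sum fun i _ => ?_
      refine mul_le_mul_of_nonneg_right (Finset.sum_le_sum fun j _ => ?_) (hπ i)
      calc T i j * (ζT j - ξ j) ≤ |T i j * (ζT j - ξ j)| := le_abs_self _
        _ = |T i j| * |ζT j - ξ j| := abs_mul _ _
        _ ≤ |T i j| * θ := by
            refine mul_le_mul_of_nonneg_left ?_ (abs_nonneg _)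
            rw [abs_sub_comm]; exact hbd j
        _ = θ * |T i j| := mul_comm _ _
end

section
/- Let a_i ∈ R^m and d_i ∈ R for i ∈ [k], let ζ^1, …, ζ^N ∈ R^m be data points, θ ≥ 0, p ∈ [1,∞], and define z = (1/N) ∑_{j∈[N]} sup{max_{i∈[k]} (a_iᵀξ + d_i) : ‖ξ - ζ^j‖_p ≤ θ}. Then z equals the optimal value of: minimize (1/N) ∑_{j∈[N]} η_j subject to η_j ≥ a_iᵀζ^j + d_i + θ‖a_i‖_{p*} for all j ∈ [N], i ∈ [k], over η ∈ R^N. -/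
open Finset
open scoped ENNReal

/-- The p-norm on ℝ^m for p ∈ [1,∞], where p = ∞ gives the sup-norm. -/
noncomputable def pnorm {m : ℕ} (p : ℝ≥0∞) (x : Fin m → ℝ) : ℝ :=
  if p = ⊤ then ⨆ i, |x i| else (∑ i, |x i| ^ p.toReal) ^ (1 / p.toReal)

/-- The dual norm ‖a‖_{p*} = sup{aᵀs : ‖s‖_p ≤ 1}. -/
noncomputable def dualNorm {m : ℕ} (p : ℝ≥0∞) (a : Fin m → ℝ) : ℝ :=
  sSup {y | ∃ s : Fin m → ℝ, pnorm p s ≤ 1 ∧ y = ∑ i, a i * s i}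

lemma toReal_one_le {p : ℝ≥0∞} (hp : 1 ≤ p) (hpt : p ≠ ⊤) : (1:ℝ) ≤ p.toReal := by
  simpa using ENNReal.toReal_mono hpt hp

lemma pnorm_smul {m : ℕ} {p : ℝ≥0∞} (hp : 1 ≤ p) {c : ℝ} (hc : 0 ≤ c)
    (s : Fin m → ℝ) : pnorm p (c • s) = c * pnorm p s := by
  unfold pnorm
  split_ifs with h
  · simp only [Pi.smul_apply, smul_eq_mul, abs_mul, abs_of_nonneg hc]
    rw [Real.mul_iSup_of_nonneg hc]
  · have hr : (1:ℝ) ≤ p.toReal := toReal_one_le hp h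
    have hr0 : p.toReal ≠ 0 := by linarith
    have : ∀ i : Fin m, |c * s i| ^ p.toReal = c ^ p.toReal * |s i| ^ p.toReal := by
      intro i
      rw [abs_mul, abs_of_nonneg hc, Real.mul_rpow hc (abs_nonneg _)]
    simp only [Pi.smul_apply, smul_eq_mul, this, ← Finset.mul_sum]
    rw [Real.mul_rpow (by positivity) (by positivity), ← Real.rpow_mul hc,
      mul_one_div_cancel hr0, Real.rpow_one]

lemma pnorm_zero {m : ℕ} {p : ℝ≥0∞} (hp : 1 ≤ p) : pnorm p (0 : Fin m → ℝ) = 0 := by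
  have := pnorm_smul (m := m) hp (c := 0) le_rfl 0
  simpa using this

lemma abs_le_of_pnorm_le {m : ℕ} {p : ℝ≥0∞} (hp : 1 ≤ p) {s : Fin m → ℝ} {θ : ℝ}
    (hθ : 0 ≤ θ) (h : pnorm p s ≤ θ) (t : Fin m) : |s t| ≤ θ := by
  unfold pnorm at h
  split_ifs at h with hpt
  · exact le_trans (le_ciSup (f := fun i => |s i|) (Set.Finite.bddAbove (Set.finite_range _)) t) h
  · have hr : (1:ℝ) ≤ p.toReal := toReal_one_le hp hpt
    have hr0 : 0 < p.toReal := by linarith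
    have h1 : |s t| ^ p.toReal ≤ ∑ i, |s i| ^ p.toReal :=
      Finset.single_le_sum (f := fun i => |s i| ^ p.toReal) (fun i _ => by positivity) (Finset.mem_univ t)
    have h2 : (|s t| ^ p.toReal) ^ (1 / p.toReal) ≤ (∑ i, |s i| ^ p.toReal) ^ (1 / p.toReal) :=
      Real.rpow_le_rpow (by positivity) h1 (by positivity)
    rw [← Real.rpow_mul (abs_nonneg _), mul_one_div_cancel hr0.ne', Real.rpow_one] at h2
    exact h2.trans h

lemma dual_zero_mem {m : ℕ} {p : ℝ≥0∞} (hp : 1 ≤ p) (a : Fin m → ℝ) :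
    (0:ℝ) ∈ {y | ∃ s : Fin m → ℝ, pnorm p s ≤ 1 ∧ y = ∑ i, a i * s i} :=
  ⟨0, by rw [pnorm_zero hp]; norm_num, by simp⟩

lemma dual_bddAbove {m : ℕ} {p : ℝ≥0∞} (hp : 1 ≤ p) (a : Fin m → ℝ) :
    BddAbove {y | ∃ s : Fin m → ℝ, pnorm p s ≤ 1 ∧ y = ∑ i, a i * s i} := by
  refine ⟨∑ i, |a i|, ?_⟩
  rintro y ⟨s, hs, rfl⟩
  calc ∑ i, a i * s i ≤ ∑ i, |a i * s i| := Finset.sum_le_sum fun i _ => le_abs_self _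
    _ ≤ ∑ i, |a i| := Finset.sum_le_sum fun i _ => by
        rw [abs_mul]
        exact mul_le_of_le_one_right (abs_nonneg _)
          (abs_le_of_pnorm_le hp zero_le_one hs i)

lemma dualNorm_nonneg {m : ℕ} {p : ℝ≥0∞} (hp : 1 ≤ p) (a : Fin m → ℝ) :
    0 ≤ dualNorm p a :=
  le_csSup (dual_bddAbove hp a) (dual_zero_mem hp a)

lemma sum_le_mul_dualNorm {m : ℕ} {p : ℝ≥0∞} (hp : 1 ≤ p) (a : Fin m → ℝ)
    {s : Fin m → ℝ} {θ : ℝ} (hθ : 0 ≤ θ) (hs : pnorm p s ≤ θ) :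
    ∑ i, a i * s i ≤ θ * dualNorm p a := by
  rcases eq_or_lt_of_le hθ with h0 | h0
  · have hz : ∀ i, s i = 0 := fun i =>
      abs_eq_zero.mp (le_antisymm (by simpa [← h0] using abs_le_of_pnorm_le hp hθ hs i)
        (abs_nonneg _))
    simp [hz, ← h0]
  · set u : Fin m → ℝ := θ⁻¹ • s with hu
    have hpu : pnorm p u ≤ 1 := by
      rw [hu, pnorm_smul hp (by positivity)]
      rw [inv_mul_le_iff₀ h0, mul_one]
      exact hs
    have hmem : ∑ i, a i * u i ∈
        {y | ∃ s : Fin m → ℝ, pnorm p s ≤ 1 ∧ y = ∑ i, a i * s i} := ⟨u, hpu, rfl⟩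
    have hle : ∑ i, a i * u i ≤ dualNorm p a := le_csSup (dual_bddAbove hp a) hmem
    have : ∑ i, a i * s i = θ * ∑ i, a i * u i := by
      rw [Finset.mul_sum]
      refine Finset.sum_congr rfl fun i _ => ?_
      simp [hu, Pi.smul_apply]
      field_simp
    rw [this]
    exact mul_le_mul_of_nonneg_left hle hθ

lemma sSup_ball_eq {m k : ℕ} {p : ℝ≥0∞} (hp : 1 ≤ p) (a : Fin (k + 1) → Fin m → ℝ)
    (d : Fin (k + 1) → ℝ) (z : Fin m → ℝ) {θ : ℝ} (hθ : 0 ≤ θ) :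
    sSup {y | ∃ ξ : Fin m → ℝ, pnorm p (ξ - z) ≤ θ ∧
        y = ⨆ i, (∑ t, a i t * ξ t + d i)}
      = ⨆ i, (∑ t, a i t * z t + d i + θ * dualNorm p (a i)) := by
  set c : Fin (k+1) → ℝ := fun i => ∑ t, a i t * z t + d i + θ * dualNorm p (a i) with hc
  set S := {y | ∃ ξ : Fin m → ℝ, pnorm p (ξ - z) ≤ θ ∧
      y = ⨆ i, (∑ t, a i t * ξ t + d i)} with hS
  -- every feasible ξ gives value ≤ sup c
  have key : ∀ ξ : Fin m → ℝ, pnorm p (ξ - z) ≤ θ →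
      ∀ i, ∑ t, a i t * ξ t + d i ≤ c i := by
    intro ξ hξ i
    have h1 : ∑ t, a i t * ξ t = ∑ t, a i t * z t + ∑ t, a i t * (ξ - z) t := by
      rw [← Finset.sum_add_distrib]
      refine Finset.sum_congr rfl fun t _ => by simp [Pi.sub_apply]; ring
    have h2 : ∑ t, a i t * (ξ - z) t ≤ θ * dualNorm p (a i) :=
      sum_le_mul_dualNorm hp (a i) hθ hξ
    rw [h1, hc]
    dsimp only
    linarith
  have hub : ∀ y ∈ S, y ≤ ⨆ i, c i := by
    rintro y ⟨ξ, hξ, rfl⟩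
    exact ciSup_le fun i => le_trans (key ξ hξ i)
      (le_ciSup (Set.Finite.bddAbove (Set.finite_range c)) i)
  have hmem0 : (⨆ i, (∑ t, a i t * z t + d i)) ∈ S := by
    refine ⟨z, by simp [pnorm_zero hp, hθ], rfl⟩
  have hSbdd : BddAbove S := ⟨_, hub⟩
  refine le_antisymm (csSup_le ⟨_, hmem0⟩ hub) (ciSup_le fun i => ?_)
  -- c i ≤ sSup S
  rcases eq_or_lt_of_le hθ with h0 | h0
  · have : c i = ∑ t, a i t * z t + d i := by rw [hc]; simp [← h0]
    rw [this]
    refine le_trans ?_ (le_csSup hSbdd hmem0)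
    exact le_ciSup (f := fun i => ∑ t, a i t * z t + d i)
      (Set.Finite.bddAbove (Set.finite_range _)) i
  · -- θ > 0
    have hd : dualNorm p (a i) ≤ (sSup S - (∑ t, a i t * z t + d i)) / θ := by
      refine csSup_le ⟨0, dual_zero_mem hp (a i)⟩ ?_
      rintro y ⟨s, hs, rfl⟩
      rw [le_div_iff₀ h0]
      have hfeas : pnorm p ((z + θ • s) - z) ≤ θ := by
        have : (z + θ • s) - z = θ • s := by ring_nf
        rw [this, pnorm_smul hp hθ]
        calc θ * pnorm p s ≤ θ * 1 := by
              refine mul_le_mul_of_nonneg_left hs hθ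
          _ = θ := mul_one θ
      have hmem : (⨆ i', (∑ t, a i' t * (z + θ • s) t + d i')) ∈ S :=
        ⟨z + θ • s, hfeas, rfl⟩
      have h3 : ∑ t, a i t * (z + θ • s) t + d i ≤ sSup S :=
        le_trans (le_ciSup (f := fun i' => ∑ t, a i' t * (z + θ • s) t + d i')
          (Set.Finite.bddAbove (Set.finite_range _)) i) (le_csSup hSbdd hmem)
      have h4 : ∑ t, a i t * (z + θ • s) t
          = ∑ t, a i t * z t + θ * ∑ t, a i t * s t := by
        rw [Finset.mul_sum, ← Finset.sum_add_distrib]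
        refine Finset.sum_congr rfl fun t _ => by simp [Pi.add_apply, Pi.smul_apply]; ring
      rw [h4] at h3
      linarith
    rw [hc]
    dsimp only
    have h5 : dualNorm p (a i) * θ ≤ sSup S - (∑ t, a i t * z t + d i) :=
      (le_div_iff₀ h0).mp hd
    linarith

/-- The worst-case expected piecewise-affine cost under an ∞-Wasserstein ball around
the empirical distribution equals the optimal value of the epigraph linear program. -/
theorem stmt18 {m k N : ℕ} (hN : 0 < N) (a : Fin (k + 1) → Fin m → ℝ)
    (d : Fin (k + 1) → ℝ) (ζ : Fin N → Fin m → ℝ) (θ : ℝ) (hθ : 0 ≤ θ)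
    (p : ℝ≥0∞) (hp : 1 ≤ p) :
    (1 / (N : ℝ)) * ∑ j, sSup {y | ∃ ξ : Fin m → ℝ, pnorm p (ξ - ζ j) ≤ θ ∧
        y = ⨆ i, (∑ t, a i t * ξ t + d i)}
      = sInf {v | ∃ η : Fin N → ℝ,
          (∀ j i, ∑ t, a i t * ζ j t + d i + θ * dualNorm p (a i) ≤ η j) ∧
          v = (1 / (N : ℝ)) * ∑ j, η j} := by
  set c : Fin N → Fin (k+1) → ℝ :=
    fun j i => ∑ t, a i t * ζ j t + d i + θ * dualNorm p (a i) with hc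
  set M : Fin N → ℝ := fun j => ⨆ i, c j i with hMdef
  have hL : ∑ j, sSup {y | ∃ ξ : Fin m → ℝ, pnorm p (ξ - ζ j) ≤ θ ∧
      y = ⨆ i, (∑ t, a i t * ξ t + d i)} = ∑ j, M j :=
    Finset.sum_congr rfl fun j _ => sSup_ball_eq hp a d (ζ j) hθ
  rw [hL]
  have hfeas : ∀ j i, c j i ≤ M j := fun j i =>
    le_ciSup (Set.Finite.bddAbove (Set.finite_range (c j))) i
  have hmem : (1 / (N:ℝ)) * ∑ j, M j ∈ {v | ∃ η : Fin N → ℝ,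
      (∀ j i, ∑ t, a i t * ζ j t + d i + θ * dualNorm p (a i) ≤ η j) ∧
      v = (1 / (N : ℝ)) * ∑ j, η j} := ⟨M, hfeas, rfl⟩
  have hlb : ∀ v ∈ {v | ∃ η : Fin N → ℝ,
      (∀ j i, ∑ t, a i t * ζ j t + d i + θ * dualNorm p (a i) ≤ η j) ∧
      v = (1 / (N : ℝ)) * ∑ j, η j}, (1 / (N:ℝ)) * ∑ j, M j ≤ v := by
    rintro v ⟨η, hη, rfl⟩
    have h1 : ∑ j, M j ≤ ∑ j, η j :=
      Finset.sum_le_sum fun j _ => ciSup_le fun i => hη j i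
    have h2 : (0:ℝ) ≤ 1 / (N:ℝ) := by positivity
    exact mul_le_mul_of_nonneg_left h1 h2
  exact le_antisymm (le_csInf ⟨_, hmem⟩ hlb) (csInf_le ⟨_, hlb⟩ hmem)
end
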